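/- Conditional entropy bound via typicality (Lemma 2, restated with its operative hypotheses). Let p be a pmf on a finite set 𝒰 × 𝒱 × ℰ × 𝒵 and let p(e,z|u,v) denote its conditional pmf. Fix n ≥ 1, δ ∈ (0,1), ε₂ ∈ [0,1]. Let C, (U^n, V^n) ∈ 𝒰^n × 𝒱^n and (E^n, Z^n) ∈ ℰ^n × 𝒵^n be random variables such that, conditionally on (C, U^n, V^n) = (c, u^n, v^n), the pairs (E_i, Z_i), i = 1, …, n, are independent with P[E_i = e, Z_i = z | C = c, U^n = u^n, V^n = v^n] = p(e, z | u_i, v_i). If P[(U^n, V^n, E^n, Z^n) ∈ T_δ^n(p)] ≥ 1 − ε₂, then H(E^n, Z^n | C, U^n, V^n) ≥ (1 − ε₂)·(1 − δ)·n·H_p(E, Z | U, V), where H_p(E, Z | U, V) is the conditional entropy under p. -/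

import Mathlib

open scoped BigOperators Classical

noncomputable section

/-- The function `x ↦ -x·log₂ x` used in Shannon entropy (with `0·log 0 = 0`). -/
def nH (x : ℝ) : ℝ := -(x * Real.logb 2 x)

/-- Shannon entropy (in bits) of a pmf on a finite set. -/
def Hent {S : Type*} [Fintype S] (p : S → ℝ) : ℝ := ∑ s, nH (p s)

/-- Pushforward of a pmf along a map: the distribution of the random variable `f`. -/
def pmap {Ω S : Type*} [Fintype Ω] (p : Ω → ℝ) (f : Ω → S) : S → ℝ :=
  fun s => ∑ ω, if f ω = s then p ω else 0

/-- Entropy (in bits) of the random variable `f` on the finite probability space `(Ω, p)`. -/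
def entOf {Ω S : Type*} [Fintype Ω] [Fintype S] (p : Ω → ℝ) (f : Ω → S) : ℝ :=
  Hent (pmap p f)

/-- Conditional Shannon entropy `H(f | g)` (in bits). -/
def condEnt {Ω S T : Type*} [Fintype Ω] [Fintype S] [Fintype T]
    (p : Ω → ℝ) (f : Ω → S) (g : Ω → T) : ℝ :=
  entOf p (fun ω => (f ω, g ω)) - entOf p g

/-- Mutual information `I(f; g)` (in bits). -/
def MI {Ω S T : Type*} [Fintype Ω] [Fintype S] [Fintype T]
    (p : Ω → ℝ) (f : Ω → S) (g : Ω → T) : ℝ :=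
  entOf p f + entOf p g - entOf p (fun ω => (f ω, g ω))

/-- Conditional mutual information `I(f; g | h)` (in bits). -/
def CMI {Ω S T W : Type*} [Fintype Ω] [Fintype S] [Fintype T] [Fintype W]
    (p : Ω → ℝ) (f : Ω → S) (g : Ω → T) (h : Ω → W) : ℝ :=
  entOf p (fun ω => (f ω, h ω)) + entOf p (fun ω => (g ω, h ω))
    - entOf p (fun ω => (f ω, g ω, h ω)) - entOf p h

/-- `p` is a probability mass function on the finite set `S`. -/
def IsPMF {S : Type*} [Fintype S] (p : S → ℝ) : Prop :=
  (∀ s, 0 ≤ p s) ∧ ∑ s, p s = 1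

/-- `W` is a transition probability (stochastic kernel) from `S` to `T`. -/
def IsKernel {S T : Type*} [Fintype S] [Fintype T] (W : S → T → ℝ) : Prop :=
  ∀ s, IsPMF (W s)

/-- Number of occurrences of the symbol `s` in the sequence `xs`. -/
def freqCount {S : Type*} {n : ℕ} (xs : Fin n → S) (s : S) : ℕ :=
  (Finset.univ.filter (fun i => xs i = s)).card

/-- `xs` lies in the (robustly) `δ`-typical set `T_δⁿ(p)`: every empirical frequency is
within a relative `δ` of the corresponding probability. -/
def InTyp {S : Type*} [Fintype S] {n : ℕ} (p : S → ℝ) (δ : ℝ) (xs : Fin n → S) : Prop :=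
  ∀ s, |(freqCount xs s : ℝ) / (n : ℝ) - p s| ≤ δ * p s

lemma nH_zero : nH 0 = 0 := by simp [nH]
lemma nH_nonneg {x : ℝ} (h0 : 0 ≤ x) (h1 : x ≤ 1) : 0 ≤ nH x := by
  have : Real.logb 2 x ≤ 0 := Real.logb_nonpos one_lt_two h0 h1
  have := mul_nonneg h0 (neg_nonneg.2 this)
  simpa [nH, mul_comm, mul_neg] using this

lemma nH_mul (x y : ℝ) : nH (x * y) = y * nH x + x * nH y := by
  rcases eq_or_ne x 0 with hx | hx
  · simp [nH, hx]
  rcases eq_or_ne y 0 with hy | hy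
  · simp [nH, hy]
  have : Real.logb 2 (x * y) = Real.logb 2 x + Real.logb 2 y := Real.logb_mul hx hy
  simp only [nH, this]; ring

lemma sum_nH_mul {B : Type*} [Fintype B] (a : ℝ) (K : B → ℝ) (hK : ∑ b, K b = 1) :
    ∑ b, nH (a * K b) = nH a + a * ∑ b, nH (K b) := by
  simp only [nH_mul]
  rw [Finset.sum_add_distrib, ← Finset.sum_mul, hK, ← Finset.mul_sum]
  ring

lemma nH_prod {ι : Type*} [DecidableEq ι] (s : Finset ι) (x : ι → ℝ) :
    nH (∏ i ∈ s, x i) = ∑ i ∈ s, (∏ j ∈ s.erase i, x j) * nH (x i) := by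
  induction s using Finset.induction_on with
  | empty => simp [nH]
  | insert a t hnotmem ih =>
    rw [Finset.prod_insert hnotmem, nH_mul, ih, Finset.sum_insert hnotmem]
    rw [Finset.erase_insert hnotmem, Finset.mul_sum]
    congr 1
    apply Finset.sum_congr rfl
    intro i hi
    rw [Finset.erase_insert_of_ne (by rintro rfl; exact hnotmem hi)]
    rw [Finset.prod_insert (fun h => hnotmem (Finset.mem_of_mem_erase h))]
    ring

lemma Hent_pi {n : ℕ} {B : Type*} [Fintype B] (K : Fin n → B → ℝ)
    (hK : ∀ i, ∑ b, K i b = 1) :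
    ∑ f : Fin n → B, nH (∏ i, K i (f i)) = ∑ i, ∑ b, nH (K i b) := by
  have h1 : ∀ f : Fin n → B, nH (∏ i, K i (f i))
      = ∑ i, (∏ j ∈ Finset.univ.erase i, K j (f j)) * nH (K i (f i)) :=
    fun f => nH_prod _ _
  simp only [h1]
  rw [Finset.sum_comm]
  apply Finset.sum_congr rfl
  intro i _
  have key : ∀ f : Fin n → B, (∏ j ∈ Finset.univ.erase i, K j (f j)) * nH (K i (f i))
      = ∏ j, (if j = i then nH (K j (f j)) else K j (f j)) := by
    intro f
    rw [← Finset.prod_erase_mul Finset.univ _ (Finset.mem_univ i)]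
    simp only [if_pos rfl]
    congr 1
    apply Finset.prod_congr rfl
    intro j hj
    rw [if_neg (Finset.ne_of_mem_erase hj)]
  simp only [key]
  have := Finset.prod_univ_sum (fun _ : Fin n => (Finset.univ : Finset B))
    (fun j b => if j = i then nH (K j b) else K j b)
  rw [Fintype.piFinset_univ] at this
  rw [← this]
  rw [Finset.prod_eq_single i (fun j _ hj => by simp only [if_neg hj]; exact hK j)
    (fun h => absurd (Finset.mem_univ i) h)]
  simp

lemma entOf_inj {Ω S : Type*} [Fintype Ω] [Fintype S] (p : Ω → ℝ) (h : Ω → S)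
    (hinj : Function.Injective h) : entOf p h = Hent p := by
  unfold entOf Hent
  rw [← Finset.sum_subset (Finset.subset_univ (Finset.univ.image h))]
  · rw [Finset.sum_image (fun x _ y _ hxy => hinj hxy)]
    apply Finset.sum_congr rfl
    intro ω _
    congr 1
    unfold pmap
    simp only [hinj.eq_iff]
    rw [Finset.sum_ite_eq' Finset.univ ω p]
    simp
  · intro s _ hs
    have : pmap p h s = 0 := by
      unfold pmap
      apply Finset.sum_eq_zero
      intro ω _
      rw [if_neg]
      rintro rfl
      exact hs (Finset.mem_image_of_mem h (Finset.mem_univ ω))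
    rw [this, nH_zero]

lemma pmap_fst {A B : Type*} [Fintype A] [Fintype B] (f : A × B → ℝ) (a : A) :
    pmap f Prod.fst a = ∑ b, f (a, b) := by
  unfold pmap
  rw [Fintype.sum_prod_type]
  rw [Finset.sum_eq_single a]
  · apply Finset.sum_congr rfl
    intro b _
    rw [if_pos rfl]
  · intro a' _ h
    apply Finset.sum_eq_zero
    intro b _
    exact if_neg h
  · intro h
    exact absurd (Finset.mem_univ a) h


set_option maxHeartbeats 2000000 in
/-- **Lemma 2 (conditional entropy bound via typicality).** Let `p` be a pmf on
`𝒰 × 𝒱 × ℰ × 𝒵` with conditional pmf `q(e,z|u,v)`. Suppose that, given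
`(C, Uⁿ, Vⁿ)`, the pairs `(E_i, Z_i)` are independent with law `q(·,·|u_i,v_i)`
(the joint law `P` on `𝒞 × (𝒰 × 𝒱)ⁿ × (ℰ × 𝒵)ⁿ` factorizes accordingly). If the
quadruple of sequences is jointly `δ`-typical with probability at least `1 − ε₂`, then
`H(Eⁿ, Zⁿ | C, Uⁿ, Vⁿ) ≥ (1 − ε₂)(1 − δ) n H_p(E, Z | U, V)`. -/
theorem cond_entropy_typicality {Cs U V Et Zt : Type*}
    [Fintype Cs] [Fintype U] [Fintype V] [Fintype Et] [Fintype Zt]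
    (p : U × V × Et × Zt → ℝ) (hp : IsPMF p)
    (q : U × V → Et × Zt → ℝ) (hq : IsKernel q)
    (hcond : ∀ u v e z,
      p (u, v, e, z) = (∑ ez : Et × Zt, p (u, v, ez.1, ez.2)) * q (u, v) (e, z))
    (n : ℕ) (hn : 1 ≤ n) (δ ε₂ : ℝ)
    (hδ : δ ∈ Set.Ioo (0 : ℝ) 1) (hε₂ : ε₂ ∈ Set.Icc (0 : ℝ) 1)
    (μ : Cs × (Fin n → U × V) → ℝ) (hμ : IsPMF μ)
    (P : Cs × (Fin n → U × V) × (Fin n → Et × Zt) → ℝ)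
    (hP : ∀ c uv ez, P (c, uv, ez) = μ (c, uv) * ∏ i, q (uv i) (ez i))
    (htyp : 1 - ε₂ ≤ ∑ ω, if InTyp p δ
        (fun i => ((ω.2.1 i).1, (ω.2.1 i).2, (ω.2.2 i).1, (ω.2.2 i).2))
      then P ω else 0) :
    (1 - ε₂) * (1 - δ) * (n : ℝ) *
        (Hent p - Hent (fun uv : U × V => ∑ ez : Et × Zt, p (uv.1, uv.2, ez.1, ez.2)))
      ≤ condEnt P (fun ω => ω.2.2) (fun ω => (ω.1, ω.2.1)) := by
  obtain ⟨hδ0, hδ1⟩ := hδ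
  obtain ⟨hε0, hε1⟩ := hε₂
  have hn0 : (0:ℝ) < n := by exact_mod_cast Nat.lt_of_lt_of_le Nat.zero_lt_one hn
  set pUV : U × V → ℝ := fun uv => ∑ ez : Et × Zt, p (uv.1, uv.2, ez.1, ez.2) with hpUVdef
  set Hq : ℝ := ∑ uv : U × V, pUV uv * Hent (q uv) with hHqdef
  have hqsum : ∀ uv : U × V, ∑ ez, q uv ez = 1 := fun uv => (hq uv).2
  have hq0 : ∀ uv ez, 0 ≤ q uv ez := fun uv => (hq uv).1
  have hq1 : ∀ uv ez, q uv ez ≤ 1 := by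
    intro uv ez
    rw [← hqsum uv]
    exact Finset.single_le_sum (fun b _ => hq0 uv b) (Finset.mem_univ ez)
  have hHentq0 : ∀ uv, 0 ≤ Hent (q uv) :=
    fun uv => Finset.sum_nonneg fun b _ => nH_nonneg (hq0 uv b) (hq1 uv b)
  have hpUV0 : ∀ uv, 0 ≤ pUV uv :=
    fun uv => Finset.sum_nonneg fun ez _ => hp.1 _
  have hHq0 : 0 ≤ Hq :=
    Finset.sum_nonneg fun uv _ => mul_nonneg (hpUV0 uv) (hHentq0 uv)
  -- chain rule : Hent p - Hent pUV = Hq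
  have hchain : Hent p - Hent pUV = Hq := by
    have e0 : Hent p = ∑ uv : U × V, ∑ ez : Et × Zt, nH (p (uv.1, uv.2, ez.1, ez.2)) := by
      have h := Fintype.sum_equiv (Equiv.prodAssoc U V (Et × Zt))
        (fun s : (U × V) × (Et × Zt) => nH (p (Equiv.prodAssoc U V (Et × Zt) s)))
        (fun s => nH (p s)) (fun s => rfl)
      unfold Hent
      rw [← h, Fintype.sum_prod_type]
      rfl
    have e1 : ∀ uv : U × V, ∑ ez : Et × Zt, nH (p (uv.1, uv.2, ez.1, ez.2))
        = nH (pUV uv) + pUV uv * Hent (q uv) := by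
      intro uv
      have : ∀ ez : Et × Zt, p (uv.1, uv.2, ez.1, ez.2) = pUV uv * q uv ez := by
        intro ez
        simpa using hcond uv.1 uv.2 ez.1 ez.2
      simp only [this]
      exact sum_nH_mul _ _ (hqsum uv)
    rw [e0]
    simp only [e1]
    rw [Finset.sum_add_distrib]
    have : Hent pUV = ∑ uv : U × V, nH (pUV uv) := rfl
    rw [hHqdef, this]
    ring
  -- sum over ez of product kernel is 1
  have hKone : ∀ x : Fin n → U × V, ∑ ez : Fin n → Et × Zt, ∏ i, q (x i) (ez i) = 1 := by
    intro x
    rw [← Fintype.piFinset_univ, ← Finset.prod_univ_sum]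
    simp only [hqsum, Finset.prod_const_one]
  -- conditional entropy as a sum
  have hP' : ∀ ω : Cs × (Fin n → U × V) × (Fin n → Et × Zt),
      P ω = μ (ω.1, ω.2.1) * ∏ i, q (ω.2.1 i) (ω.2.2 i) := fun ω => hP ω.1 ω.2.1 ω.2.2
  have hsum_ez : ∀ (c : Cs) (x : Fin n → U × V),
      ∑ ez : Fin n → Et × Zt, P (c, x, ez) = μ (c, x) := by
    intro c x
    simp only [hP]
    rw [← Finset.mul_sum, hKone x, mul_one]
  have hgmap : pmap P (fun ω => (ω.1, ω.2.1)) = μ := by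
    funext s
    have hgm : pmap P (fun ω => (ω.1, ω.2.1)) s
        = pmap (fun ϖ : (Cs × (Fin n → U × V)) × (Fin n → Et × Zt) =>
            P (ϖ.1.1, ϖ.1.2, ϖ.2)) Prod.fst s := by
      unfold pmap
      exact Fintype.sum_equiv
        ⟨fun ω => ((ω.1, ω.2.1), ω.2.2), fun ϖ => (ϖ.1.1, ϖ.1.2, ϖ.2),
          fun ω => rfl, fun ϖ => rfl⟩ _ _ (fun ω => rfl)
    rw [hgm, pmap_fst]
    obtain ⟨c, x⟩ := s
    exact hsum_ez c x
  have key : ∀ (c : Cs) (x : Fin n → U × V),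
      ∑ ez : Fin n → Et × Zt, nH (P (c, x, ez))
      = nH (μ (c, x)) + μ (c, x) * ∑ i, Hent (q (x i)) := by
    intro c x
    simp only [hP]
    rw [sum_nH_mul _ _ (hKone x), Hent_pi (fun i => q (x i)) (fun i => hqsum (x i))]
    rfl
  have hμexp : Hent μ = ∑ c, ∑ x : Fin n → U × V, nH (μ (c, x)) := by
    unfold Hent
    rw [Fintype.sum_prod_type]
  have hHentP : Hent P = Hent μ + ∑ c, ∑ x : Fin n → U × V,
      μ (c, x) * ∑ i, Hent (q (x i)) := by
    have lhs : Hent P = ∑ c, ∑ x : Fin n → U × V, ∑ ez : Fin n → Et × Zt,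
        nH (P (c, x, ez)) := by
      unfold Hent
      rw [Fintype.sum_prod_type]
      apply Finset.sum_congr rfl
      intro c _
      rw [Fintype.sum_prod_type]
    rw [lhs]
    simp only [key]
    rw [hμexp]
    rw [← Finset.sum_add_distrib]
    apply Finset.sum_congr rfl
    intro c _
    rw [← Finset.sum_add_distrib]
  have hcond_eq : condEnt P (fun ω => ω.2.2) (fun ω => (ω.1, ω.2.1))
      = ∑ c, ∑ x : Fin n → U × V, μ (c, x) * ∑ i, Hent (q (x i)) := by
    unfold condEnt
    have h1 : entOf P (fun ω => ((ω.2.2 : Fin n → Et × Zt), (ω.1, ω.2.1))) = Hent P := by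
      apply entOf_inj
      intro a b hab
      obtain ⟨ha1, ha2, ha3⟩ := a
      obtain ⟨hb1, hb2, hb3⟩ := b
      simp only [Prod.mk.injEq] at hab
      simp [hab.1, hab.2.1, hab.2.2]
    rw [h1]
    have h2 : entOf P (fun ω => (ω.1, ω.2.1)) = Hent μ := by
      unfold entOf
      rw [hgmap]
    rw [h2, hHentP]
    ring
  -- typicality: marginal frequency bound
  set quad : (Fin n → U × V) → (Fin n → Et × Zt) → (Fin n → U × V × Et × Zt) :=
    fun x ez => fun i => ((x i).1, (x i).2, (ez i).1, (ez i).2) with hquaddef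
  have hsplit : ∀ (x : Fin n → U × V) (ez : Fin n → Et × Zt) (uv : U × V),
      (freqCount x uv : ℕ)
        = ∑ ez' : Et × Zt, freqCount (quad x ez) (uv.1, uv.2, ez'.1, ez'.2) := by
    intro x ez uv
    unfold freqCount
    simp only [Finset.card_filter]
    rw [Finset.sum_comm]
    apply Finset.sum_congr rfl
    intro i _
    by_cases h : x i = uv
    · subst h
      rw [if_pos rfl]
      symm
      rw [Fintype.sum_prod_type]
      simp only [hquaddef, Prod.mk.injEq, true_and]
      simp [ite_and, Finset.sum_ite_eq]
    · rw [if_neg h]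
      symm
      apply Finset.sum_eq_zero
      intro ez' _
      rw [if_neg]
      simp only [hquaddef, Prod.mk.injEq]
      rintro ⟨h1, h2, -⟩
      exact h (Prod.ext h1 h2)
  have hlow : ∀ (x : Fin n → U × V) (ez : Fin n → Et × Zt), InTyp p δ (quad x ez) →
      ∀ uv : U × V, (1 - δ) * pUV uv ≤ (freqCount x uv : ℝ) / n := by
    intro x ez ht uv
    have h1 : ((freqCount x uv : ℕ) : ℝ) / n
        = ∑ ez' : Et × Zt, (freqCount (quad x ez) (uv.1, uv.2, ez'.1, ez'.2) : ℝ) / n := by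
      rw [hsplit x ez uv]
      push_cast
      rw [Finset.sum_div]
    rw [h1]
    have h2 : (1 - δ) * pUV uv = ∑ ez' : Et × Zt, (1 - δ) * p (uv.1, uv.2, ez'.1, ez'.2) := by
      rw [hpUVdef, ← Finset.mul_sum]
    rw [h2]
    apply Finset.sum_le_sum
    intro ez' _
    have h3 := (abs_le.1 (ht (uv.1, uv.2, ez'.1, ez'.2))).1
    have heq : (1 - δ) * p (uv.1, uv.2, ez'.1, ez'.2)
        = p (uv.1, uv.2, ez'.1, ez'.2) - δ * p (uv.1, uv.2, ez'.1, ez'.2) := by ring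
    rw [heq]
    linarith
  -- good set mass
  set GoodX : (Fin n → U × V) → Prop :=
    fun x => ∀ uv : U × V, (1 - δ) * pUV uv ≤ (freqCount x uv : ℝ) / n with hGoodXdef
  have hPnn : ∀ ω, 0 ≤ P ω := by
    intro ω
    rw [hP']
    exact mul_nonneg (hμ.1 _) (Finset.prod_nonneg fun i _ => hq0 _ _)
  have hmass : 1 - ε₂ ≤ ∑ c, ∑ x : Fin n → U × V, (if GoodX x then μ (c, x) else 0) := by
    refine le_trans htyp ?_
    have step1 : ∑ ω : Cs × (Fin n → U × V) × (Fin n → Et × Zt),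
        (if InTyp p δ (fun i => ((ω.2.1 i).1, (ω.2.1 i).2, (ω.2.2 i).1, (ω.2.2 i).2))
          then P ω else 0)
        ≤ ∑ ω : Cs × (Fin n → U × V) × (Fin n → Et × Zt),
        (if GoodX ω.2.1 then P ω else 0) := by
      apply Finset.sum_le_sum
      intro ω _
      by_cases ht : InTyp p δ (fun i => ((ω.2.1 i).1, (ω.2.1 i).2, (ω.2.2 i).1, (ω.2.2 i).2))
      · rw [if_pos ht, if_pos (hlow ω.2.1 ω.2.2 ht)]
      · rw [if_neg ht]
        split
        · exact hPnn ω
        · exact le_refl 0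
    refine le_trans step1 (le_of_eq ?_)
    rw [Fintype.sum_prod_type]
    apply Finset.sum_congr rfl
    intro c _
    rw [Fintype.sum_prod_type]
    apply Finset.sum_congr rfl
    intro x _
    by_cases h : GoodX x
    · simp only [if_pos h]
      exact hsum_ez c x
    · simp only [if_neg h, Finset.sum_const_zero]
  -- per-good-sequence entropy lower bound
  have hxh0 : ∀ x : Fin n → U × V, 0 ≤ ∑ i, Hent (q (x i)) :=
    fun x => Finset.sum_nonneg fun i _ => hHentq0 _
  have hcount : ∀ (x : Fin n → U × V) (uv : U × V),
      ((freqCount x uv : ℕ) : ℝ) = ∑ i, if x i = uv then (1:ℝ) else 0 := by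
    intro x uv
    rw [freqCount, Finset.card_filter]
    push_cast
    simp
  have hgoodh : ∀ x : Fin n → U × V, GoodX x →
      (1 - δ) * n * Hq ≤ ∑ i, Hent (q (x i)) := by
    intro x hx
    have e2 : ∑ i, Hent (q (x i))
        = ∑ uv : U × V, ((freqCount x uv : ℕ) : ℝ) * Hent (q uv) := by
      have : ∀ i, Hent (q (x i)) = ∑ uv : U × V, if x i = uv then Hent (q uv) else 0 := by
        intro i
        symm
        rw [Finset.sum_ite_eq Finset.univ (x i) (fun uv => Hent (q uv))]
        simp
      simp only [this]
      rw [Finset.sum_comm]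
      apply Finset.sum_congr rfl
      intro uv _
      rw [hcount, Finset.sum_mul]
      apply Finset.sum_congr rfl
      intro i _
      split <;> simp
    rw [e2]
    have e3 : (1 - δ) * n * Hq = ∑ uv : U × V, (1 - δ) * n * pUV uv * Hent (q uv) := by
      rw [hHqdef, Finset.mul_sum]
      apply Finset.sum_congr rfl
      intro uv _
      ring
    rw [e3]
    apply Finset.sum_le_sum
    intro uv _
    apply mul_le_mul_of_nonneg_right _ (hHentq0 uv)
    have h4 := (le_div_iff₀ hn0).1 (hx uv)
    have h5 : (1 - δ) * (n : ℝ) * pUV uv = (1 - δ) * pUV uv * n := by ring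
    rw [h5]
    exact h4
  -- final assembly
  rw [hcond_eq]
  have hB0 : 0 ≤ (1 - δ) * (n : ℝ) * Hq :=
    mul_nonneg (mul_nonneg (by linarith) (le_of_lt hn0)) hHq0
  have hstep : (1 - ε₂) * (1 - δ) * (n : ℝ) * (Hent p - Hent pUV)
      = (1 - ε₂) * ((1 - δ) * (n : ℝ) * Hq) := by
    rw [hchain]; ring
  rw [hstep]
  calc (1 - ε₂) * ((1 - δ) * (n : ℝ) * Hq)
      ≤ (∑ c, ∑ x : Fin n → U × V, if GoodX x then μ (c, x) else 0)
          * ((1 - δ) * (n : ℝ) * Hq) := mul_le_mul_of_nonneg_right hmass hB0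
    _ = ∑ c, ∑ x : Fin n → U × V,
          (if GoodX x then μ (c, x) else 0) * ((1 - δ) * (n : ℝ) * Hq) := by
        rw [Finset.sum_mul]
        exact Finset.sum_congr rfl fun c _ => Finset.sum_mul _ _ _
    _ ≤ ∑ c, ∑ x : Fin n → U × V, μ (c, x) * ∑ i, Hent (q (x i)) := by
        apply Finset.sum_le_sum
        intro c _
        apply Finset.sum_le_sum
        intro x _
        by_cases hg : GoodX x
        · rw [if_pos hg]
          exact mul_le_mul_of_nonneg_left (hgoodh x hg) (hμ.1 _)
        · rw [if_neg hg, zero_mul]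
          exact mul_nonneg (hμ.1 _) (hxh0 x)
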